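/- (Mandelstam–Tamm for state transfer) Let H be a Hermitian matrix and |ψ⟩ a unit vector. If e^{-iHt₀}|ψ⟩ is orthogonal to |ψ⟩ for some t₀ > 0, then t₀ ≥ π / (2√(⟨ψ|H²|ψ⟩ − ⟨ψ|H|ψ⟩²)). -/

import Mathlib

open Matrix


lemma sin_lb {y : ℝ} (hy0 : 0 ≤ y) (hyle : y ≤ Real.pi/2) :
    Real.pi * y - y^2 ≤ Real.pi * Real.sin y := by
  have hpi := Real.pi_pos
  rcases eq_or_lt_of_le hy0 with rfl | hy0'
  · simp
  rcases le_or_gt y 1 with h1 | h1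
  · have hc : Real.pi * (y - y^3/4) < Real.pi * Real.sin y :=
      mul_lt_mul_of_pos_left (lt_of_le_of_lt (by nlinarith [pow_pos hy0' 3]) (Real.sin_gt_sub_cube hy0')) hpi
    have h4 : Real.pi * y ≤ 4 := by
      nlinarith [Real.pi_le_four, mul_nonneg hpi.le (by linarith : (0:ℝ) ≤ 1 - y)]
    have h5 : (0:ℝ) ≤ (4 - Real.pi * y) * y^2 :=
      mul_nonneg (by linarith) (sq_nonneg y)
    nlinarith [hc, h5]
  · have hmono : Real.pi * Real.sin 1 ≤ Real.pi * Real.sin y :=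
      mul_le_mul_of_nonneg_left
        (Real.sin_le_sin_of_le_of_le_pi_div_two (by linarith) hyle h1.le) hpi.le
    have hs1 : Real.pi/4 ≤ Real.sin 1 := by
      have he : Real.sin 1 = Real.cos (Real.pi/2 - 1) := (Real.cos_pi_div_two_sub 1).symm
      rw [he]
      have hb := Real.one_sub_sq_div_two_le_cos (x := Real.pi/2 - 1)
      have hp1 : Real.pi < 3.141593 := Real.pi_lt_d6
      have hp2 : (3.141592:ℝ) < Real.pi := Real.pi_gt_d6
      have hprod : (0:ℝ) ≤ (Real.pi - 3.141592) * (3.141593 - Real.pi) :=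
        mul_nonneg (by linarith) (by linarith)
      nlinarith [hprod, hb]
    have hs1' : Real.pi * (Real.pi/4) ≤ Real.pi * Real.sin 1 :=
      mul_le_mul_of_nonneg_left hs1 hpi.le
    nlinarith [sq_nonneg (y - Real.pi/2), hmono, hs1']

lemma key_ineq (x : ℝ) : Real.pi^2/4 ≤ x^2 + Real.pi * Real.cos x := by
  have hpi := Real.pi_pos
  wlog hx : 0 ≤ x generalizing x
  · have := this (-x) (by linarith)
    simpa [Real.cos_neg] using this
  rcases le_or_gt (Real.pi/2) x with h | h
  · have h1 : Real.sin (x - Real.pi/2) ≤ x - Real.pi/2 := Real.sin_le (by linarith)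
    have h2 : Real.cos x = - Real.sin (x - Real.pi/2) := by
      have := Real.cos_add_pi_div_two (x - Real.pi/2)
      rw [sub_add_cancel] at this
      exact this
    nlinarith [sq_nonneg (x - Real.pi/2)]
  · have hcos : Real.cos x = Real.sin (Real.pi/2 - x) := (Real.sin_pi_div_two_sub x).symm
    have hsin := sin_lb (y := Real.pi/2 - x) (by linarith) (by linarith)
    rw [hcos]
    nlinarith [hsin]

theorem stmt4 (N : ℕ) (H : Matrix (Fin N) (Fin N) ℂ) (hH : H.IsHermitian)
    (ψ : Fin N → ℂ) (hψ : star ψ ⬝ᵥ ψ = 1)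
    (E1 E2 : ℝ)
    (hE1 : star ψ ⬝ᵥ (H *ᵥ ψ) = (E1 : ℂ))
    (hE2 : star ψ ⬝ᵥ ((H * H) *ᵥ ψ) = (E2 : ℂ))
    (t₀ : ℝ) (ht₀ : 0 < t₀)
    (horth : star ψ ⬝ᵥ ((NormedSpace.exp ((-(Complex.I * t₀)) • H)) *ᵥ ψ) = 0) :
    t₀ ≥ Real.pi / (2 * Real.sqrt (E2 - E1^2)) := by
  classical
  set U : Matrix (Fin N) (Fin N) ℂ := (hH.eigenvectorUnitary : Matrix (Fin N) (Fin N) ℂ) with hU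
  set lam : Fin N → ℝ := hH.eigenvalues with hlam
  set v : Fin N → ℂ := star U *ᵥ ψ with hv
  have hstarv : star v = star ψ ᵥ* U := by
    rw [hv, star_mulVec, star_eq_conjTranspose, conjTranspose_conjTranspose]
  have key : ∀ d : Fin N → ℂ,
      star ψ ⬝ᵥ ((U * diagonal d * star U) *ᵥ ψ)
        = ∑ k, d k * (Complex.normSq (v k) : ℂ) := by
    intro d
    rw [← mulVec_mulVec, ← mulVec_mulVec, dotProduct_mulVec, ← hstarv, ← hv]
    rw [dotProduct]
    apply Finset.sum_congr rfl
    intro k _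
    rw [mulVec_diagonal, Pi.star_apply, Complex.star_def,
      show (starRingEnd ℂ) (v k) * (d k * v k) = d k * ((starRingEnd ℂ) (v k) * v k) from by ring,
      ← Complex.normSq_eq_conj_mul_self]
  set p : Fin N → ℝ := fun k => Complex.normSq (v k) with hp
  have hpnn : ∀ k, 0 ≤ p k := fun k => Complex.normSq_nonneg _
  -- spectral theorem
  have hspec : H = U * diagonal (fun k => (lam k : ℂ)) * star U := by
    have := hH.spectral_theorem
    convert this using 2
    rw [Unitary.conjStarAlgAut_apply]; rfl
  -- sum p = 1
  have hsum1 : ∑ k, p k = 1 := by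
    have h1 : star ψ ⬝ᵥ ((U * diagonal (fun _ => (1:ℂ)) * star U) *ᵥ ψ) = 1 := by
      rw [diagonal_one]
      rw [mul_one, (mem_unitaryGroup_iff).mp hH.eigenvectorUnitary.2]
      rw [one_mulVec, hψ]
    rw [key] at h1
    simp only [one_mul] at h1
    have := congrArg Complex.re h1
    simpa using this
  -- sum p lam = E1
  have hsumE1 : ∑ k, p k * lam k = E1 := by
    have h1 := key (fun k => (lam k : ℂ))
    rw [← hspec, hE1] at h1
    have := congrArg Complex.re h1.symm
    simpa [mul_comm] using this
  -- sum p lam² = E2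
  have hsumE2 : ∑ k, p k * (lam k)^2 = E2 := by
    have hHH : H * H = U * diagonal (fun k => ((lam k : ℂ))^2) * star U := by
      rw [hspec]
      have hUU : star U * U = 1 := (mem_unitaryGroup_iff').mp hH.eigenvectorUnitary.2
      calc U * diagonal (fun k => (lam k : ℂ)) * star U * (U * diagonal (fun k => (lam k : ℂ)) * star U)
          = U * (diagonal (fun k => (lam k : ℂ)) * (star U * U) * diagonal (fun k => (lam k : ℂ))) * star U := by
            noncomm_ring
        _ = U * diagonal (fun k => ((lam k : ℂ))^2) * star U := by
            rw [hUU, mul_one, diagonal_mul_diagonal]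
            congr 1
            congr 1
            funext k; ring
    have h1 := key (fun k => ((lam k : ℂ))^2)
    rw [← hHH, hE2] at h1
    have := congrArg Complex.re h1.symm
    simpa [← Complex.ofReal_pow, mul_comm] using this
  -- exp and orthogonality
  have hexp : NormedSpace.exp ((-(Complex.I * t₀)) • H)
      = U * diagonal (fun k => Complex.exp ((-(Complex.I * t₀)) * lam k)) * star U := by
    have hconj : (-(Complex.I * t₀)) • H
        = U * ((-(Complex.I * t₀)) • diagonal (fun k => (lam k : ℂ))) * star U := by
      rw [hspec]; rw [mul_smul_comm, smul_mul_assoc]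
    rw [hconj]
    have hu := Matrix.exp_units_conj (Unitary.toUnits hH.eigenvectorUnitary)
      ((-(Complex.I * t₀)) • diagonal (fun k => (lam k : ℂ)))
    have hcoe : ((Unitary.toUnits hH.eigenvectorUnitary : (Matrix (Fin N) (Fin N) ℂ)ˣ) : Matrix (Fin N) (Fin N) ℂ) = U := rfl
    have hcoeinv : (((Unitary.toUnits hH.eigenvectorUnitary)⁻¹ : (Matrix (Fin N) (Fin N) ℂ)ˣ) : Matrix (Fin N) (Fin N) ℂ) = star U := rfl
    rw [hcoe, hcoeinv] at hu
    rw [hu]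
    congr 1
    congr 1
    rw [← diagonal_smul, Matrix.exp_diagonal, Pi.exp_def]
    congr 1
    funext k
    simp only [Pi.smul_apply, smul_eq_mul]
    rw [← Complex.exp_eq_exp_ℂ]
  have horth' : ∑ k, Complex.exp ((-(Complex.I * t₀)) * lam k) * (p k : ℂ) = 0 := by
    rw [← key]
    rw [← hexp]
    exact horth
  -- multiply by e^{i t₀ E1} and take real part
  have hcos : ∑ k, p k * Real.cos (t₀ * (lam k - E1)) = 0 := by
    have h2 : ∑ k, Complex.exp (((t₀ * (E1 - lam k) : ℝ) : ℂ) * Complex.I) * (p k : ℂ) = 0 := by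
      have h3 : ∀ k : Fin N, Complex.exp (((t₀ * (E1 - lam k) : ℝ) : ℂ) * Complex.I) * (p k : ℂ)
          = Complex.exp (Complex.I * t₀ * E1) * (Complex.exp ((-(Complex.I * t₀)) * lam k) * (p k : ℂ)) := by
        intro k
        rw [← mul_assoc, ← Complex.exp_add]
        congr 2
        push_cast
        ring
      rw [Finset.sum_congr rfl (fun k _ => h3 k), ← Finset.mul_sum, horth', mul_zero]
    have h4 := congrArg Complex.re h2
    simp only [Complex.zero_re] at h4
    rw [Complex.re_sum] at h4
    rw [← h4]
    apply Finset.sum_congr rfl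
    intro k _
    rw [Complex.mul_re, Complex.exp_ofReal_mul_I_re, Complex.exp_ofReal_mul_I_im,
      Complex.ofReal_re, Complex.ofReal_im, mul_zero, sub_zero]
    rw [show t₀ * (E1 - lam k) = -(t₀ * (lam k - E1)) by ring, Real.cos_neg]
    ring
  -- main inequality
  have hvar : ∑ k, p k * (t₀ * (lam k - E1))^2 = t₀^2 * (E2 - E1^2) := by
    have : ∀ k, p k * (t₀ * (lam k - E1))^2
        = t₀^2 * ((p k * (lam k)^2) - 2*E1*(p k * lam k) + E1^2 * p k) := by
      intro k; ring
    rw [Finset.sum_congr rfl (fun k _ => this k)]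
    rw [← Finset.mul_sum]
    rw [Finset.sum_add_distrib, Finset.sum_sub_distrib, ← Finset.mul_sum, ← Finset.mul_sum]
    rw [hsumE1, hsumE2, hsum1]
    ring
  have hmain : Real.pi^2/4 ≤ t₀^2 * (E2 - E1^2) := by
    have hle : ∑ k, p k * (Real.pi^2/4)
        ≤ ∑ k, p k * ((t₀ * (lam k - E1))^2 + Real.pi * Real.cos (t₀ * (lam k - E1))) := by
      apply Finset.sum_le_sum
      intro k _
      exact mul_le_mul_of_nonneg_left (key_ineq _) (hpnn k)
    rw [← Finset.sum_mul, hsum1, one_mul] at hle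
    have hsplit : ∑ k, p k * ((t₀ * (lam k - E1))^2 + Real.pi * Real.cos (t₀ * (lam k - E1)))
        = (∑ k, p k * (t₀ * (lam k - E1))^2)
          + Real.pi * ∑ k, p k * Real.cos (t₀ * (lam k - E1)) := by
      rw [Finset.mul_sum, ← Finset.sum_add_distrib]
      apply Finset.sum_congr rfl
      intro k _; ring
    rw [hsplit, hvar, hcos, mul_zero, add_zero] at hle
    exact hle
  have hpi := Real.pi_pos
  have hD : 0 < E2 - E1^2 := by nlinarith
  have hsq : Real.pi / (2 * t₀) ≤ Real.sqrt (E2 - E1^2) := by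
    rw [show Real.sqrt (E2 - E1^2) = Real.sqrt (E2 - E1^2) from rfl, Real.le_sqrt (by positivity) hD.le]
    rw [div_pow, div_le_iff₀ (by positivity)]
    nlinarith [hmain]
  have hs0 : 0 < Real.sqrt (E2 - E1^2) := lt_of_lt_of_le (by positivity) hsq
  rw [ge_iff_le, div_le_iff₀ (by positivity)]
  rw [div_le_iff₀ (by positivity)] at hsq
  nlinarith
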